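/- Let R = ℤ[X]/(X⁴ − 1), let α denote the residue class of X, and let I ⊆ R be the ideal generated by α − 1. Then for every integer n ≥ 1, the additive group I/I^{n+1} (equivalently, the image of I in R/I^{n+1}) is finite of cardinality 4ⁿ. -/

import Mathlib

open Polynomial

/-- The ring `R = ℤ[X]/(X⁴ − 1)`, the complex representation ring of `ℤ/4`. -/
abbrev RepRingC4 : Type := ℤ[X] ⧸ Ideal.span ({X ^ 4 - 1} : Set ℤ[X])

/-- `α`, the residue class of `X` in `ℤ[X]/(X⁴ − 1)`. -/
noncomputable def alphaC4 : RepRingC4 :=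
  Ideal.Quotient.mk (Ideal.span ({X ^ 4 - 1} : Set ℤ[X])) X

/-- The augmentation ideal `I = (α − 1) ⊆ R`. -/
noncomputable def augIdealC4 : Ideal RepRingC4 := Ideal.span {alphaC4 - 1}

/-- `h = X³+X²+X+1`, so that `X⁴-1 = (X-1)h`. -/
noncomputable def hPoly : ℤ[X] := X ^ 3 + X ^ 2 + X + 1

lemma X_sub_one_prime : Prime (X - 1 : ℤ[X]) := by
  simpa using prime_X_sub_C (1 : ℤ)

lemma X_sub_one_ne_zero : (X - 1 : ℤ[X]) ≠ 0 := by
  simpa using X_sub_C_ne_zero (1 : ℤ)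

lemma X_sub_one_dvd_iff {p : ℤ[X]} : (X - 1 : ℤ[X]) ∣ p ↔ p.eval 1 = 0 := by
  rw [show (X - 1 : ℤ[X]) = X - C 1 by simp]
  exact dvd_iff_isRoot

lemma X_sub_one_not_dvd_hPoly : ¬ (X - 1 : ℤ[X]) ∣ hPoly := by
  rw [X_sub_one_dvd_iff]
  simp [hPoly]

/-- The ideal `((X-1)^k, h)` of `ℤ[X]`. -/
noncomputable def Jid (k : ℕ) : Ideal ℤ[X] :=
  Ideal.span {(X - 1) ^ k, hPoly}

lemma w_pow_mem (k : ℕ) : (X - 1 : ℤ[X]) ^ k ∈ Jid k :=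
  Ideal.mem_span_pair.mpr ⟨1, 0, by ring⟩

lemma dvd_four_of_mem {k : ℕ} {m : ℤ}
    (h : (C m) * (X - 1) ^ k ∈ Jid (k + 1)) : (4 : ℤ) ∣ m := by
  obtain ⟨a, b, hab⟩ := Ideal.mem_span_pair.mp h
  have hdvd : (X - 1 : ℤ[X]) ^ k ∣ b * hPoly :=
    ⟨C m - a * (X - 1), by linear_combination hab⟩
  obtain ⟨c, hc⟩ := X_sub_one_prime.pow_dvd_of_dvd_mul_right k X_sub_one_not_dvd_hPoly hdvd
  have key : (X - 1 : ℤ[X]) ^ k * (C m)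
      = (X - 1 : ℤ[X]) ^ k * (a * (X - 1) + c * hPoly) := by
    linear_combination hPoly * hc - hab
  have hm := mul_left_cancel₀ (pow_ne_zero k X_sub_one_ne_zero) key
  have := congrArg (eval 1) hm
  simp [hPoly] at this
  exact ⟨c.eval 1, by linarith⟩

lemma four_smul_mem (k : ℕ) : (C (4:ℤ)) * (X - 1) ^ k ∈ Jid (k + 1) :=
  Ideal.mem_span_pair.mpr
    ⟨-((X - 1) ^ 2 + 4 * (X - 1) + 6), (X - 1) ^ k, by
      simp only [hPoly, map_ofNat]
      ring⟩

lemma Jid_succ_le (k : ℕ) : Jid (k + 1) ≤ Jid k := by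
  apply Ideal.span_le.mpr
  rintro x hx
  rcases hx with rfl | rfl
  · exact Ideal.mem_span_pair.mpr ⟨X - 1, 0, by ring⟩
  · exact Ideal.mem_span_pair.mpr ⟨0, 1, by ring⟩

lemma card_Jid_quotient (n : ℕ) : Nat.card (ℤ[X] ⧸ Jid n) = 4 ^ n := by
  induction n with
  | zero =>
      have htop : Jid 0 = ⊤ := by
        rw [Ideal.eq_top_iff_one]
        simpa using w_pow_mem 0
      haveI : Subsingleton (ℤ[X] ⧸ Jid 0) := by
        rw [htop]
        infer_instance
      exact Nat.card_eq_one_iff_unique.mpr ⟨inferInstance, ⟨0⟩⟩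
  | succ k ih =>
      set G := ℤ[X] ⧸ Jid (k + 1) with hG
      let π : ℤ[X] ⧸ Jid (k + 1) →+* ℤ[X] ⧸ Jid k :=
        Ideal.Quotient.factor (Jid_succ_le k)
      have hπ : Function.Surjective π := by
        intro x
        obtain ⟨p, rfl⟩ := Ideal.Quotient.mk_surjective x
        exact ⟨Ideal.Quotient.mk _ p, Ideal.Quotient.factor_mk (Jid_succ_le k) p⟩
      set s : AddSubgroup G := π.toAddMonoidHom.ker with hs
      -- the kernel is the cyclic group generated by the class of `(X-1)^k`
      set z : G := Ideal.Quotient.mk (Jid (k + 1)) ((X - 1) ^ k) with hz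
      let χ : ℤ →ₗ[ℤ] G := LinearMap.toSpanSingleton ℤ G z
      have hset : (s : Set G) = (LinearMap.range χ : Set G) := by
        ext x
        constructor
        · intro hx
          obtain ⟨p, rfl⟩ := Ideal.Quotient.mk_surjective x
          have hp : p ∈ Jid k := by
            rw [← Ideal.Quotient.eq_zero_iff_mem]
            exact hx
          obtain ⟨a, b, hab⟩ := Ideal.mem_span_pair.mp hp
          refine ⟨a.eval 1, ?_⟩
          have hd : (X - 1 : ℤ[X]) ∣ (a - C (a.eval 1)) := by
            rw [X_sub_one_dvd_iff]
            simp
          obtain ⟨q, hq⟩ := hd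
          have hmem : C (a.eval 1) * (X - 1) ^ k - p ∈ Jid (k + 1) := by
            refine Ideal.mem_span_pair.mpr ⟨-q, -b, ?_⟩
            linear_combination (X - 1 : ℤ[X]) ^ k * hq - hab
          have : χ (a.eval 1) = Ideal.Quotient.mk _ p := by
            show (a.eval 1 : ℤ) • z = _
            rw [hz, ← map_zsmul, Ideal.Quotient.mk_eq_mk_iff_sub_mem, zsmul_eq_mul]
            convert hmem using 3
            exact (eq_intCast C _).symm
          exact this
        · rintro ⟨m, rfl⟩
          show π (m • z) = 0
          rw [map_zsmul]
          have : π z = 0 := by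
            rw [hz]
            show Ideal.Quotient.factor (Jid_succ_le k)
              (Ideal.Quotient.mk _ ((X - 1) ^ k)) = 0
            rw [Ideal.Quotient.factor_mk, Ideal.Quotient.eq_zero_iff_mem]
            exact w_pow_mem k
          rw [this, smul_zero]
      have hker : LinearMap.ker χ = Ideal.span {(4 : ℤ)} := by
        ext m
        rw [Ideal.mem_span_singleton, LinearMap.mem_ker]
        constructor
        · intro hm
          apply dvd_four_of_mem (k := k) (m := m)
          rw [← Ideal.Quotient.eq_zero_iff_mem]
          have : χ m = Ideal.Quotient.mk (Jid (k+1)) (C m * (X - 1) ^ k) := by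
            show m • z = _
            rw [hz, ← map_zsmul, zsmul_eq_mul]
            congr 1
          rw [← this]
          exact hm
        · rintro ⟨d, rfl⟩
          show (4 * d : ℤ) • z = 0
          rw [mul_comm, mul_zsmul]
          have h4 : (4 : ℤ) • z = 0 := by
            rw [hz, ← map_zsmul, Ideal.Quotient.eq_zero_iff_mem, zsmul_eq_mul]
            have h4m := four_smul_mem k
            convert h4m using 2
            exact (eq_intCast C _).symm
          rw [h4, smul_zero]
      have hcards : Nat.card s = 4 := by
        have e1 : Nat.card s = Nat.card (LinearMap.range χ) :=
          Nat.card_congr (Equiv.setCongr hset)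
        rw [e1, Nat.card_congr (LinearMap.quotKerEquivRange χ).toEquiv.symm, hker,
          Nat.card_congr (Int.quotientSpanEquivZMod 4).toEquiv, Nat.card_zmod]
        rfl
      have hquot : Nat.card (G ⧸ s) = 4 ^ k := by
        rw [Nat.card_congr
          (QuotientAddGroup.quotientKerEquivOfSurjective π.toAddMonoidHom hπ).toEquiv]
        exact ih
      rw [AddSubgroup.card_eq_card_quotient_mul_card_addSubgroup s, hquot, hcards]
      ring


lemma mul_w_mem_iff {n : ℕ} {p : ℤ[X]} :
    p * (X - 1) ∈ Ideal.span {(X - 1 : ℤ[X]) ^ (n + 1), X ^ 4 - 1} ↔ p ∈ Jid n := by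
  constructor
  · intro h
    obtain ⟨a, b, hab⟩ := Ideal.mem_span_pair.mp h
    refine Ideal.mem_span_pair.mpr ⟨a, b, ?_⟩
    have hcan : (X - 1 : ℤ[X]) * (a * (X - 1) ^ n + b * hPoly)
        = (X - 1) * p := by
      simp only [hPoly]
      linear_combination hab
    exact mul_left_cancel₀ X_sub_one_ne_zero hcan
  · intro h
    obtain ⟨a, b, hab⟩ := Ideal.mem_span_pair.mp h
    refine Ideal.mem_span_pair.mpr ⟨a, b, ?_⟩
    simp only [hPoly] at hab
    linear_combination (X - 1 : ℤ[X]) * hab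

set_option maxHeartbeats 1000000
set_option synthInstance.maxHeartbeats 400000

/-- For every `n ≥ 1`, the additive group `I/I^{n+1}`, i.e. the image of
`I` in `R/I^{n+1}`, is finite of cardinality `4ⁿ`. -/
theorem card_augIdeal_quotient (n : ℕ) (hn : 1 ≤ n) :
    Nat.card
      (augIdealC4.map (Ideal.Quotient.mk (augIdealC4 ^ (n + 1)))) = 4 ^ n := by
  classical
  set I0 : Ideal ℤ[X] := Ideal.span ({X ^ 4 - 1} : Set ℤ[X]) with hI0
  set mk1 : ℤ[X] →+* RepRingC4 := Ideal.Quotient.mk I0 with hmk1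
  set mk2 : RepRingC4 →+* (RepRingC4 ⧸ augIdealC4 ^ (n + 1)) :=
    Ideal.Quotient.mk (augIdealC4 ^ (n + 1)) with hmk2
  set θ : ℤ[X] →+* (RepRingC4 ⧸ augIdealC4 ^ (n + 1)) := mk2.comp mk1 with hθ
  have hsurj : Function.Surjective θ :=
    (Ideal.Quotient.mk_surjective).comp (Ideal.Quotient.mk_surjective)
  have hy : mk1 (X - 1) = alphaC4 - 1 := by
    rw [map_sub, map_one]; rfl
  have haug : augIdealC4 = Ideal.map mk1 (Ideal.span {(X - 1 : ℤ[X])}) := by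
    rw [Ideal.map_span, Set.image_singleton, hy, augIdealC4]
  have hkerθ : RingHom.ker θ
      = Ideal.span {(X - 1 : ℤ[X]) ^ (n + 1), X ^ 4 - 1} := by
    rw [hθ, ← RingHom.comap_ker, hmk2, Ideal.mk_ker, haug, ← Ideal.map_pow,
      Ideal.span_singleton_pow, Ideal.comap_map_of_surjective mk1
        Ideal.Quotient.mk_surjective]
    have : Ideal.comap mk1 ⊥ = I0 := by
      rw [← RingHom.ker_eq_comap_bot, hmk1, Ideal.mk_ker]
    rw [this, Ideal.span_insert, hI0]
  -- the `ℤ`-linear map `p ↦ θ p * θ (X - 1)`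
  set Φ : ℤ[X] →ₗ[ℤ] (RepRingC4 ⧸ augIdealC4 ^ (n + 1)) :=
    (LinearMap.mulRight ℤ (θ (X - 1))).comp θ.toAddMonoidHom.toIntLinearMap with hΦ
  have hΦapp : ∀ p : ℤ[X], Φ p = θ (p * (X - 1)) := by
    intro p
    rw [map_mul]
    rfl
  have hmapI : augIdealC4.map mk2 = Ideal.span {θ (X - 1)} := by
    have h1 : augIdealC4.map mk2
        = (Ideal.map mk1 (Ideal.span {(X - 1 : ℤ[X])})).map mk2 :=
      congrArg (fun J : Ideal RepRingC4 => J.map mk2) haug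
    rw [h1, Ideal.map_map, ← hθ, Ideal.map_span, Set.image_singleton]
  have hsub : (augIdealC4.map mk2).restrictScalars ℤ = LinearMap.range Φ := by
    ext x
    simp only [Submodule.restrictScalars_mem, LinearMap.mem_range, hmapI,
      Ideal.mem_span_singleton']
    constructor
    · rintro ⟨a, rfl⟩
      obtain ⟨p, rfl⟩ := hsurj a
      exact ⟨p, (hΦapp p).trans (map_mul θ p (X - 1))⟩
    · rintro ⟨p, rfl⟩
      exact ⟨θ p, ((hΦapp p).trans (map_mul θ p (X - 1))).symm⟩
  have hker : LinearMap.ker Φ = (Jid n).restrictScalars ℤ := by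
    ext p
    simp only [LinearMap.mem_ker, Submodule.restrictScalars_mem]
    rw [hΦapp, ← RingHom.mem_ker (f := θ), hkerθ]
    exact mul_w_mem_iff
  calc Nat.card (augIdealC4.map mk2)
      = Nat.card ((augIdealC4.map mk2).restrictScalars ℤ) := rfl
    _ = Nat.card (LinearMap.range Φ) := by rw [hsub]
    _ = Nat.card (ℤ[X] ⧸ LinearMap.ker Φ) :=
        Nat.card_congr (LinearMap.quotKerEquivRange Φ).toEquiv.symm
    _ = Nat.card (ℤ[X] ⧸ (Jid n).restrictScalars ℤ) := by rw [hker]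
    _ = Nat.card (ℤ[X] ⧸ Jid n) :=
        Nat.card_congr (Submodule.Quotient.restrictScalarsEquiv ℤ (Jid n)).toEquiv
    _ = 4 ^ n := card_Jid_quotient n
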